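/- arXiv:1206.6027 — 4 statements merged into one kernel-verified Lean document; each statement's English description precedes it below -/
import Mathlib

section
/- The two-sided ideal C of F̄ = K⟨X ∪ {t}⟩ generated by all homogeneous elements f with φ(f) = 0 (the largest graded ideal contained in ker φ) is generated, as a two-sided ideal, by the commutators [x_i, t] = x_i t − t x_i for all x_i ∈ X. -/
noncomputable section

/-! ### Common definitions for the letterplace correspondence (La Scala)

`FA K Y` is the free associative algebra `K⟨Y⟩` (monoid algebra of the free monoid on `Y`);
`PL K Y` is the letterplace polynomial algebra `K[y(j) : y ∈ Y, j ∈ ℕ*]`.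
The algebra `F̄ = K⟨X ∪ {t}⟩` is modeled as `FA K (Option X)` with `t = none`,
and similarly `P̄ = PL K (Option X)`. -/

/-- The free associative algebra `K⟨Y⟩`. -/
abbrev FA (K : Type*) [CommSemiring K] (Y : Type*) := MonoidAlgebra K (FreeMonoid Y)

/-- The letterplace polynomial algebra `K[y(j)]`, with places in `ℕ* = ℕ+`. -/
abbrev PL (K : Type*) [CommSemiring K] (Y : Type*) := MvPolynomial (Y × ℕ+) K

variable (K : Type*) [Field K]

/-- The generator of `K⟨Y⟩` corresponding to a letter. -/
def gen {Y : Type*} (y : Y) : FA K Y := MonoidAlgebra.of K (FreeMonoid Y) (FreeMonoid.of y)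

/-- The extra letter `t` of `F̄ = K⟨X ∪ {t}⟩`. -/
def tv {X : Type*} : FA K (Option X) := gen K (none : Option X)

/-- `φ : F̄ → F̄`, the algebra endomorphism with `φ(x_i) = x_i`, `φ(t) = 1`. -/
def phi {X : Type*} : FA K (Option X) →ₐ[K] FA K (Option X) :=
  (MonoidAlgebra.lift K (FA K (Option X)) (FreeMonoid (Option X)))
    (FreeMonoid.lift fun o => Option.elim o 1 (fun x => gen K (some x)))

/-- `f` is homogeneous of degree `d` (all words in its support have length `d`). -/
def IsHomog {Y : Type*} (d : ℕ) (f : FA K Y) : Prop :=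
  ∀ w ∈ f.coeff.support, FreeMonoid.length w = d

/-- The homogeneous component of degree `d` of `f ∈ K⟨Y⟩`. -/
def homComp {Y : Type*} (d : ℕ) (f : FA K Y) : FA K Y :=
  ∑ w ∈ f.coeff.support.filter (fun w => FreeMonoid.length w = d), MonoidAlgebra.single w (f.coeff w)

/-- A two-sided ideal is graded (for the grading by total degree) iff it contains all
homogeneous components of its elements. -/
def IsGradedF {Y : Type*} (I : TwoSidedIdeal (FA K Y)) : Prop := ∀ f ∈ I, ∀ d, homComp K d f ∈ I

/-- `C ⊆ F̄`: the two-sided ideal generated by all homogeneous elements of `ker φ`,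
i.e. the largest graded ideal contained in `ker φ`. -/
def Cideal {X : Type*} : TwoSidedIdeal (FA K (Option X)) :=
  TwoSidedIdeal.span {f | (∃ d, IsHomog K d f) ∧ phi K f = 0}

/-- The embedding of free monoids `X* → (X ∪ {t})*`. -/
def embWord {X : Type*} : FreeMonoid X →* FreeMonoid (Option X) := FreeMonoid.map some

/-- The canonical embedding `F = K⟨X⟩ → F̄ = K⟨X ∪ {t}⟩`. -/
def emb {X : Type*} : FA K X →ₐ[K] FA K (Option X) :=
  (MonoidAlgebra.lift K (FA K (Option X)) (FreeMonoid X))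
    ((MonoidAlgebra.of K (FreeMonoid (Option X))).comp embWord)

/-- The top degree `deg(f)` of `f` (max length of a word in the support). -/
def degF {Y : Type*} (f : FA K Y) : ℕ := f.coeff.support.sup FreeMonoid.length

/-- The homogenization `f^* = Σ_k f_k t^{deg f − k} ∈ F̄` of `f ∈ F`. -/
def hstar {X : Type*} (f : FA K X) : FA K (Option X) :=
  ∑ w ∈ f.coeff.support,
    MonoidAlgebra.single
      (embWord w * (FreeMonoid.of (none : Option X)) ^ (degF K f - FreeMonoid.length w)) (f.coeff w)

/-- Homogenization of an element already written in `F̄` (used for elements of `φ(F̄) = F`). -/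
def hstarO {X : Type*} (f : FA K (Option X)) : FA K (Option X) :=
  ∑ w ∈ f.coeff.support,
    MonoidAlgebra.single
      (w * (FreeMonoid.of (none : Option X)) ^ (degF K f - FreeMonoid.length w)) (f.coeff w)

/-- The homogenization `I^*` of an ideal `I ⊆ F`: the two-sided ideal of `F̄` generated by all
homogeneous elements of `φ⁻¹(I)` (identifying `F` with its image in `F̄`). -/
def hstarIdeal {X : Type*} (I : TwoSidedIdeal (FA K X)) : TwoSidedIdeal (FA K (Option X)) :=
  TwoSidedIdeal.span {g | (∃ d, IsHomog K d g) ∧ ∃ f ∈ I, phi K g = emb K f}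

/-- The saturation `Sat(J) = φ(J)^*` of a graded ideal `C ⊆ J ⊆ F̄`: the two-sided ideal
generated by all homogeneous elements `g` with `φ(g) ∈ φ(J)`. -/
def SatF {X : Type*} (J : TwoSidedIdeal (FA K (Option X))) : TwoSidedIdeal (FA K (Option X)) :=
  TwoSidedIdeal.span {g | (∃ d, IsHomog K d g) ∧ ∃ h ∈ J, phi K g = phi K h}

/-! ### The commutative (letterplace) side -/

/-- The shift of letterplace variables: `k · y(j) = y(j + k)`. -/
def shiftVar {Y : Type*} (k : ℕ) (p : Y × ℕ+) : Y × ℕ+ :=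
  (p.1, ⟨p.2 + k, Nat.add_pos_left p.2.2 k⟩)

/-- The action of `k ∈ ℕ` on the letterplace algebra. -/
def shift {Y : Type*} (k : ℕ) : PL K Y →ₐ[K] PL K Y := MvPolynomial.rename (shiftVar k)

/-- An ideal of `PL K Y` is an ℕ-ideal if it is stable under all shifts. -/
def IsNIdeal {Y : Type*} (I : Ideal (PL K Y)) : Prop := ∀ k, ∀ f ∈ I, shift K k f ∈ I

/-- The ℕ-ideal `⟨S⟩_ℕ` generated by a set `S`. -/
def nspan {Y : Type*} (S : Set (PL K Y)) : Ideal (PL K Y) :=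
  Ideal.span {g | ∃ k, ∃ f ∈ S, g = shift K k f}

/-- The place multidegree `∂(m)` of a monomial. -/
def placeDeg {Y : Type*} (m : (Y × ℕ+) →₀ ℕ) : ℕ+ →₀ ℕ := Finsupp.mapDomain Prod.snd m

/-- `f` is multihomogeneous of place multidegree `μ`. -/
def IsMultiHomog {Y : Type*} (μ : ℕ+ →₀ ℕ) (f : PL K Y) : Prop :=
  ∀ m ∈ f.support, placeDeg m = μ

/-- The multihomogeneous component of multidegree `μ` of `f`. -/
def mComp {Y : Type*} (μ : ℕ+ →₀ ℕ) (f : PL K Y) : PL K Y :=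
  ∑ m ∈ f.support.filter (fun m => placeDeg m = μ),
    MvPolynomial.monomial m (MvPolynomial.coeff m f)

/-- An ideal is multigraded iff it contains all multihomogeneous components of its elements. -/
def IsMultiGraded {Y : Type*} (I : Ideal (PL K Y)) : Prop := ∀ f ∈ I, ∀ μ, mComp K μ f ∈ I

/-- `ψ : P̄ → P̄`, with `ψ(x_i(j)) = x_i(j)` and `ψ(t(j)) = 1`. -/
def psi {X : Type*} : PL K (Option X) →ₐ[K] PL K (Option X) :=
  MvPolynomial.aeval (fun p => Option.elim p.1 1 (fun x => MvPolynomial.X (some x, p.2)))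

/-- The canonical embedding `P → P̄`. -/
def embP {X : Type*} : PL K X →ₐ[K] PL K (Option X) :=
  MvPolynomial.rename (fun p => (some p.1, p.2))

/-- The top multidegree `∂(f)` of `f` (componentwise max over the support). -/
def topDeg {Y : Type*} (f : PL K Y) : ℕ+ →₀ ℕ := f.support.sup placeDeg

/-- The pure-`t` monomial `∏_k t(k)^{ν_k}` with exponents `ν`. -/
def tExp {X : Type*} (ν : ℕ+ →₀ ℕ) : ((Option X) × ℕ+) →₀ ℕ :=
  Finsupp.mapDomain (fun k => ((none : Option X), k)) ν

/-- The multihomogenization `f^* = Σ_μ f_μ ∏_k t(k)^{ν_k − μ_k} ∈ P̄` of `f ∈ P`. -/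
def mhstar {X : Type*} (f : PL K X) : PL K (Option X) :=
  ∑ m ∈ f.support,
    MvPolynomial.monomial
      (Finsupp.mapDomain (fun p => ((some p.1 : Option X), p.2)) m +
        tExp (topDeg K f - placeDeg m))
      (MvPolynomial.coeff m f)

/-- Multihomogenization of an element already written in `P̄` (used for elements of `ψ(P̄) = P`). -/
def mhstarO {X : Type*} (f : PL K (Option X)) : PL K (Option X) :=
  ∑ m ∈ f.support,
    MvPolynomial.monomial (m + tExp (topDeg K f - placeDeg m)) (MvPolynomial.coeff m f)

/-- The multihomogenization `I^*` of an ℕ-ideal `I ⊆ P`: the ℕ-ideal of `P̄` generated by all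
multihomogeneous elements of `ψ⁻¹(I)` (identifying `P` with its image in `P̄`). -/
def mhstarIdeal {X : Type*} (I : Ideal (PL K X)) : Ideal (PL K (Option X)) :=
  nspan K {g | (∃ μ, IsMultiHomog K μ g) ∧ ∃ f ∈ I, psi K g = embP K f}

/-- The saturation `Sat(J) = ψ(J)^*` of a multigraded ℕ-ideal `J ⊆ P̄`. -/
def SatP {X : Type*} (J : Ideal (PL K (Option X))) : Ideal (PL K (Option X)) :=
  nspan K {g | (∃ μ, IsMultiHomog K μ g) ∧ ∃ h ∈ J, psi K g = psi K h}

/-! ### The letterplace embedding -/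

/-- Exponent vector of the letterplace monomial `y_1(n+1) y_2(n+2) ⋯` of a word. -/
def wordExpAux {Y : Type*} : ℕ → List Y → ((Y × ℕ+) →₀ ℕ)
  | _, [] => 0
  | n, y :: w => Finsupp.single (y, ⟨n + 1, n.succ_pos⟩) 1 + wordExpAux (n + 1) w

/-- The letterplace monomial `y_1(1) y_2(2) ⋯ y_d(d)` of a word `y_1 y_2 ⋯ y_d`. -/
def wordExp {Y : Type*} (w : FreeMonoid Y) : (Y × ℕ+) →₀ ℕ := wordExpAux 0 (FreeMonoid.toList w)

/-- The letterplace embedding `ι : K⟨Y⟩ → PL K Y` (a `K`-linear map). -/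
def iota {Y : Type*} (f : FA K Y) : PL K Y :=
  Finsupp.sum f.coeff fun w c => MvPolynomial.monomial (wordExp w) c

/-- The set `L` of multilinear elements of `PL K Y`: multihomogeneous elements of `V = Im ι`. -/
def Lset {Y : Type*} : Set (PL K Y) :=
  {f | f ∈ Set.range (iota K (Y := Y)) ∧ ∃ μ, IsMultiHomog K μ f}

/-- A letterplace ideal (`L`-ideal): an ℕ-ideal ℕ-generated by its multilinear elements. -/
def IsLPIdeal {Y : Type*} (J : Ideal (PL K Y)) : Prop :=
  IsNIdeal K J ∧ J = nspan K ((J : Set (PL K Y)) ∩ Lset K)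

/-- The generators `x_i(1)t(2) − t(1)x_i(2)` of `D`. -/
def Dgens (X : Type*) : Set (PL K (Option X)) :=
  {g | ∃ x : X,
    g = MvPolynomial.X ((some x : Option X), (1 : ℕ+)) *
          MvPolynomial.X ((none : Option X), (2 : ℕ+)) -
        MvPolynomial.X ((none : Option X), (1 : ℕ+)) *
          MvPolynomial.X ((some x : Option X), (2 : ℕ+))}

/-- The generators `ῑ([t, x_i]) = t(1)x_i(2) − x_i(1)t(2)` of `D`. -/
def DgensT (X : Type*) : Set (PL K (Option X)) :=
  {g | ∃ x : X,
    g = MvPolynomial.X ((none : Option X), (1 : ℕ+)) *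
          MvPolynomial.X ((some x : Option X), (2 : ℕ+)) -
        MvPolynomial.X ((some x : Option X), (1 : ℕ+)) *
          MvPolynomial.X ((none : Option X), (2 : ℕ+))}

/-- `D ⊆ P̄`: the letterplace analogue of `C`. -/
def Did (X : Type*) : Ideal (PL K (Option X)) := nspan K (Dgens K X)

/-- The product `∏_{d < k ≤ d'} t(k)`. -/
def tProd (X : Type*) (d d' : ℕ) : PL K (Option X) :=
  ∏ k ∈ Finset.range (d' - d), MvPolynomial.X ((none : Option X), ⟨d + k + 1, Nat.succ_pos _⟩)

/-- The `L`-saturation `Sat_L(J)` of a letterplace ideal `D ⊆ J ⊆ P̄`. -/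
def SatL {X : Type*} (J : Ideal (PL K (Option X))) : Ideal (PL K (Option X)) :=
  nspan K {f | f ∈ Lset K ∧ ∃ d', MvPolynomial.totalDegree f ≤ d' ∧
    tProd K X (MvPolynomial.totalDegree f) d' * f ∈ J}

/-- `J` is `L`-saturated: `t(d+1)·f ∈ J` with `f` multilinear of degree `d` implies `f ∈ J`. -/
def IsLSat {X : Type*} (J : Ideal (PL K (Option X))) : Prop :=
  ∀ f ∈ Lset K (Y := Option X),
    MvPolynomial.X ((none : Option X), ⟨MvPolynomial.totalDegree f + 1, Nat.succ_pos _⟩) * f ∈ J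
      → f ∈ J

/-! ### Monomial orderings -/

/-- The shift action on letterplace monomials. -/
def shiftMon {Y : Type*} (k : ℕ) (m : (Y × ℕ+) →₀ ℕ) : (Y × ℕ+) →₀ ℕ :=
  Finsupp.mapDomain (shiftVar k) m

/-- A monomial ordering of a (possibly infinite) commutative polynomial ring, given as a strict
order relation on exponent vectors: a well-founded strict total order with `1` minimal,
compatible with multiplication of monomials. -/
structure IsMonOrd {σ : Type*} (r : (σ →₀ ℕ) → (σ →₀ ℕ) → Prop) : Prop where
  total : ∀ m n, r m n ∨ m = n ∨ r n m
  irrefl : ∀ m, ¬ r m m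
  trans : ∀ a b c, r a b → r b c → r a c
  wf : WellFounded r
  zero_min : ∀ m, ¬ r m 0
  add_compat : ∀ m n u, r m n → r (u + m) (u + n)

/-- The ordering is compatible with the ℕ-action (an `ℕ`-ordering). -/
def IsNCompat {Y : Type*} (r : ((Y × ℕ+) →₀ ℕ) → ((Y × ℕ+) →₀ ℕ) → Prop) : Prop :=
  ∀ (k : ℕ) m n, r m n → r (shiftMon k m) (shiftMon k n)

/-- The weight of a letterplace monomial: the largest place index occurring in it
(`⊥ = -∞` for the monomial `1`). -/
def wt {Y : Type*} (m : (Y × ℕ+) →₀ ℕ) : WithBot ℕ :=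
  m.support.sup (fun p => ((p.2 : ℕ) : WithBot ℕ))

/-- A weighted ordering: smaller weight implies smaller monomial. -/
def IsWeighted {Y : Type*} (r : ((Y × ℕ+) →₀ ℕ) → ((Y × ℕ+) →₀ ℕ) → Prop) : Prop :=
  ∀ m n, wt m < wt n → r m n

/-- A monomial ordering of the free algebra `K⟨Y⟩`: a well-founded strict total order on words
compatible with two-sided multiplication. -/
structure IsWordOrd {Y : Type*} (r : FreeMonoid Y → FreeMonoid Y → Prop) : Prop where
  total : ∀ m n, r m n ∨ m = n ∨ r n m
  irrefl : ∀ m, ¬ r m m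
  trans : ∀ a b c, r a b → r b c → r a c
  wf : WellFounded r
  mul_compat : ∀ m n u v, r m n → r (u * m * v) (u * n * v)

/-- A word ordering is graded if shorter words are smaller. -/
def IsGradedWordOrd {Y : Type*} (r : FreeMonoid Y → FreeMonoid Y → Prop) : Prop :=
  ∀ m n, FreeMonoid.length m < FreeMonoid.length n → r m n

/-- The word ordering of `K⟨Y⟩` induced by a monomial ordering of `PL K Y` via `ι`. -/
def inducedWordOrd {Y : Type*} (r : ((Y × ℕ+) →₀ ℕ) → ((Y × ℕ+) →₀ ℕ) → Prop)
    (m n : FreeMonoid Y) : Prop := r (wordExp m) (wordExp n)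

/-- The factor of a letterplace monomial at place `j` (a monomial of `P(j) ≅ P(1)`). -/
def fiber {Y : Type*} (m : (Y × ℕ+) →₀ ℕ) (j : ℕ+) : Y →₀ ℕ :=
  Finsupp.comapDomain (fun y => (y, j)) m (fun _ _ _ _ h => congrArg Prod.fst h)

/-- The place `ℕ`-ordering of `PL K Y` induced by a monomial ordering `r1` of `P(1)`:
compare the factors at the highest place where the two monomials differ. -/
def placeExt {Y : Type*} (r1 : (Y →₀ ℕ) → (Y →₀ ℕ) → Prop)
    (m n : (Y × ℕ+) →₀ ℕ) : Prop :=
  ∃ j : ℕ+, r1 (fiber m j) (fiber n j) ∧ ∀ j', j < j' → fiber m j' = fiber n j'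

/-! ### Leading monomials and Gröbner bases -/

/-- `m` is the leading monomial of `f ∈ PL K Y` with respect to the ordering `r`. -/
def IsLM {Y : Type*} (r : ((Y × ℕ+) →₀ ℕ) → ((Y × ℕ+) →₀ ℕ) → Prop)
    (f : PL K Y) (m : (Y × ℕ+) →₀ ℕ) : Prop :=
  m ∈ f.support ∧ ∀ m' ∈ f.support, m' ≠ m → r m' m

/-- `LM(S)`: the ideal generated by the leading monomials of the nonzero elements of `S`. -/
def LMideal {Y : Type*} (r : ((Y × ℕ+) →₀ ℕ) → ((Y × ℕ+) →₀ ℕ) → Prop)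
    (S : Set (PL K Y)) : Ideal (PL K Y) :=
  Ideal.span {p | ∃ f ∈ S, f ≠ 0 ∧ ∃ m, IsLM K r f m ∧ p = MvPolynomial.monomial m (1 : K)}

/-- The ideal generated by `ℕ·lm(G)`. -/
def shLMideal {Y : Type*} (r : ((Y × ℕ+) →₀ ℕ) → ((Y × ℕ+) →₀ ℕ) → Prop)
    (G : Set (PL K Y)) : Ideal (PL K Y) :=
  Ideal.span {p | ∃ g ∈ G, g ≠ 0 ∧ ∃ m, IsLM K r g m ∧
    ∃ k : ℕ, p = MvPolynomial.monomial (shiftMon k m) (1 : K)}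

/-- `G ⊆ I` is a Gröbner `ℕ`-basis of the ℕ-ideal `I`: `ℕ·lm(G)` generates `LM(I)`. -/
def IsGroebnerNB {Y : Type*} (r : ((Y × ℕ+) →₀ ℕ) → ((Y × ℕ+) →₀ ℕ) → Prop)
    (I : Ideal (PL K Y)) (G : Set (PL K Y)) : Prop :=
  G ⊆ (I : Set (PL K Y)) ∧ shLMideal K r G = LMideal K r (I : Set (PL K Y))

/-- `G` is a Gröbner `L`-basis of the letterplace ideal `J`: `G ⊆ J ∩ L` and the leading monomial
of every nonzero multilinear element of `J` is divisible by a shift of some `lm(g)`, `g ∈ G`. -/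
def IsGroebnerLB {Y : Type*} (r : ((Y × ℕ+) →₀ ℕ) → ((Y × ℕ+) →₀ ℕ) → Prop)
    (J : Ideal (PL K Y)) (G : Set (PL K Y)) : Prop :=
  G ⊆ (J : Set (PL K Y)) ∩ Lset K ∧
  ∀ f ∈ (J : Set (PL K Y)) ∩ Lset K, f ≠ 0 →
    ∃ g ∈ G, ∃ (k : ℕ) (mg mf : (Y × ℕ+) →₀ ℕ),
      IsLM K r g mg ∧ IsLM K r f mf ∧ shiftMon k mg ≤ mf

/-- `w` is the leading monomial (word) of `f ∈ K⟨Y⟩` with respect to the word ordering `r'`. -/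
def IsLMF {Y : Type*} (r' : FreeMonoid Y → FreeMonoid Y → Prop)
    (f : FA K Y) (w : FreeMonoid Y) : Prop :=
  w ∈ f.coeff.support ∧ ∀ w' ∈ f.coeff.support, w' ≠ w → r' w' w

/-- `G ⊆ I` is a Gröbner basis of the two-sided ideal `I ⊆ K⟨Y⟩`: the leading word of every
nonzero `f ∈ I` has the form `u · lm(g) · v` for some nonzero `g ∈ G`. -/
def IsGroebnerBF {Y : Type*} (r' : FreeMonoid Y → FreeMonoid Y → Prop)
    (I : TwoSidedIdeal (FA K Y)) (G : Set (FA K Y)) : Prop :=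
  G ⊆ (I : Set (FA K Y)) ∧
  ∀ f ∈ I, f ≠ 0 → ∃ g ∈ G, g ≠ 0 ∧ ∃ (u v wf wg : FreeMonoid Y),
    IsLMF K r' f wf ∧ IsLMF K r' g wg ∧ wf = u * wg * v

/-! ### Normal forms -/

/-- The generators `x_i(1) x_j(1)` of `N`. -/
def Ngens (Y : Type*) : Set (PL K Y) :=
  {g | ∃ i j : Y, g = MvPolynomial.X (i, (1 : ℕ+)) * MvPolynomial.X (j, (1 : ℕ+))}

/-- A polynomial is in normal form modulo `N` iff in each of its monomials all place indices
are pairwise distinct. -/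
def NormalModN {Y : Type*} (f : PL K Y) : Prop :=
  ∀ m ∈ f.support, ∀ k : ℕ+, placeDeg m k ≤ 1

/-- A polynomial is in normal form modulo `D` iff none of its monomials is divisible by a shift
of the leading monomial of some generator `t(1)x_i(2) − x_i(1)t(2)` of `D`. -/
def NormalModD {X : Type*} (r : (((Option X) × ℕ+) →₀ ℕ) → (((Option X) × ℕ+) →₀ ℕ) → Prop)
    (f : PL K (Option X)) : Prop :=
  ∀ m ∈ f.support, ∀ g ∈ DgensT K X, ∀ mg, IsLM K r g mg → ∀ k : ℕ, ¬ shiftMon k mg ≤ m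

/-- `G` is a Gröbner `L`-basis of `J` modulo `D`: its elements are multilinear elements of `J`
in normal form modulo `D`, and together with the generators of `D` they form a
Gröbner `L`-basis of `J`. -/
def IsGroebnerLBmodD {X : Type*}
    (r : (((Option X) × ℕ+) →₀ ℕ) → (((Option X) × ℕ+) →₀ ℕ) → Prop)
    (J : Ideal (PL K (Option X))) (G : Set (PL K (Option X))) : Prop :=
  (∀ g ∈ G, g ∈ (J : Set (PL K (Option X))) ∩ Lset K ∧ NormalModD K r g) ∧
  IsGroebnerLB K r J (G ∪ DgensT K X)

/-- The commutators `[t, x_i] = t x_i − x_i t` in `F̄`. -/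
def commGens (X : Type*) : Set (FA K (Option X)) :=
  {h | ∃ x : X, h = tv K * gen K (some x) - gen K (some x) * tv K}

/-- A polynomial of `F̄` is in normal form modulo `C` iff none of its words contains the leading
word of some commutator `[t, x_i]` as a factor. -/
def NormalModC {X : Type*} (r' : FreeMonoid (Option X) → FreeMonoid (Option X) → Prop)
    (f : FA K (Option X)) : Prop :=
  ∀ w ∈ f.coeff.support, ∀ g ∈ commGens K X, ∀ wg, IsLMF K r' g wg →
    ¬ ∃ u v, w = u * wg * v

/-! ### Concrete orderings on words -/

/-- The order on the letters of `X ∪ {t}` (with `X = ℕ`): `t ≺ x_1 ≺ x_2 ≺ ⋯`. -/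
def optLt : Option ℕ → Option ℕ → Prop
  | none, some _ => True
  | some i, some j => i < j
  | _, none => False

/-- The graded right lexicographic ordering on words: first compare lengths, then compare
letter by letter from the right. -/
def grRightLex {Y : Type*} (lt : Y → Y → Prop) (dflt : Y) (m n : FreeMonoid Y) : Prop :=
  FreeMonoid.length m < FreeMonoid.length n ∨
  (FreeMonoid.length m = FreeMonoid.length n ∧
    ∃ t < FreeMonoid.length m,
      lt ((FreeMonoid.toList m).getD t dflt) ((FreeMonoid.toList n).getD t dflt) ∧
      ∀ s, t < s → (FreeMonoid.toList m).getD s dflt = (FreeMonoid.toList n).getD s dflt)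

end

section Stmt0Aux

open MonoidAlgebra FreeMonoid

variable {K : Type*} [Field K] {X : Type*}

noncomputable abbrev Jc (K : Type*) [Field K] (X : Type*) : TwoSidedIdeal (FA K (Option X)) :=
  TwoSidedIdeal.span {g | ∃ x : X, g = gen K (some x) * tv K - tv K * gen K (some x)}

lemma phi_gen (y : Option X) :
    phi K (gen K y) = Option.elim y 1 (fun x => gen K (some x)) := by
  simp [phi, gen, MonoidAlgebra.lift_of]

lemma comm_mem (x : X) : gen K (some x) * tv K - tv K * gen K (some x) ∈ Jc K X :=
  TwoSidedIdeal.subset_span ⟨x, rfl⟩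

lemma comm_pow_mem (x : X) (j : ℕ) :
    gen K (some x) * tv K ^ j - tv K ^ j * gen K (some x) ∈ Jc K X := by
  induction j with
  | zero => simpa using (Jc K X).zero_mem
  | succ j ih =>
    have h1 : gen K (some x) * tv K ^ (j + 1) - tv K ^ (j + 1) * gen K (some x)
        = (gen K (some x) * tv K - tv K * gen K (some x)) * tv K ^ j
          + tv K * (gen K (some x) * tv K ^ j - tv K ^ j * gen K (some x)) := by
      rw [pow_succ']
      noncomm_ring
    rw [h1]
    exact (Jc K X).add_mem ((Jc K X).mul_mem_right _ _ (comm_mem x))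
      ((Jc K X).mul_mem_left _ _ ih)

lemma claimA (l : List (Option X)) :
    (MonoidAlgebra.of K (FreeMonoid (Option X)) (FreeMonoid.ofList l))
      - tv K ^ (l.countP Option.isNone) *
        MonoidAlgebra.of K (FreeMonoid (Option X)) (FreeMonoid.ofList (l.filter Option.isSome))
      ∈ Jc K X := by
  induction l with
  | nil => simpa using (Jc K X).zero_mem
  | cons a l ih =>
    cases a with
    | none =>
      have h2 : (none :: l).filter Option.isSome = l.filter Option.isSome := rfl
      have h3 : (none :: l).countP Option.isNone = l.countP Option.isNone + 1 := by simp
      rw [FreeMonoid.ofList_cons, map_mul, h2, h3]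
      have htv : MonoidAlgebra.of K (FreeMonoid (Option X)) (FreeMonoid.of none) = tv K := rfl
      rw [htv]
      have h4 : tv K * MonoidAlgebra.of K (FreeMonoid (Option X)) (FreeMonoid.ofList l)
          - tv K ^ (l.countP Option.isNone + 1) *
            MonoidAlgebra.of K (FreeMonoid (Option X))
              (FreeMonoid.ofList (l.filter Option.isSome))
          = tv K * ((MonoidAlgebra.of K (FreeMonoid (Option X)) (FreeMonoid.ofList l))
              - tv K ^ (l.countP Option.isNone) *
                MonoidAlgebra.of K (FreeMonoid (Option X))
                  (FreeMonoid.ofList (l.filter Option.isSome))) := by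
        rw [pow_succ']
        noncomm_ring
      rw [h4]
      exact (Jc K X).mul_mem_left _ _ ih
    | some x =>
      have h2 : (some x :: l).filter Option.isSome = some x :: l.filter Option.isSome := rfl
      have h3 : (some x :: l).countP Option.isNone = l.countP Option.isNone := by simp
      rw [FreeMonoid.ofList_cons, map_mul, h2, h3, FreeMonoid.ofList_cons, map_mul]
      have hg : MonoidAlgebra.of K (FreeMonoid (Option X)) (FreeMonoid.of (some x))
          = gen K (some x) := rfl
      rw [hg]
      set A := MonoidAlgebra.of K (FreeMonoid (Option X)) (FreeMonoid.ofList l) with hA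
      set B := MonoidAlgebra.of K (FreeMonoid (Option X))
        (FreeMonoid.ofList (l.filter Option.isSome)) with hB
      have h4 : gen K (some x) * A - tv K ^ (l.countP Option.isNone) * (gen K (some x) * B)
          = gen K (some x) * (A - tv K ^ (l.countP Option.isNone) * B)
            + (gen K (some x) * tv K ^ (l.countP Option.isNone) - tv K ^ (l.countP Option.isNone) * gen K (some x)) * B := by
        noncomm_ring
      rw [h4]
      exact (Jc K X).add_mem ((Jc K X).mul_mem_left _ _ ih)
        ((Jc K X).mul_mem_right _ _ (comm_pow_mem x _))

/-- `q` on words: delete the `t` letters. -/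
def Qf {X : Type*} (w : FreeMonoid (Option X)) : FreeMonoid (Option X) :=
  FreeMonoid.ofList ((FreeMonoid.toList w).filter Option.isSome)

lemma phi_ofList (l : List (Option X)) :
    phi K (MonoidAlgebra.of K (FreeMonoid (Option X)) (FreeMonoid.ofList l)) =
      MonoidAlgebra.of K (FreeMonoid (Option X)) (FreeMonoid.ofList (l.filter Option.isSome)) := by
  induction l with
  | nil =>
    rw [show (FreeMonoid.ofList (List.filter Option.isSome ([] : List (Option X))))
      = (1 : FreeMonoid (Option X)) from rfl, FreeMonoid.ofList_nil, map_one, map_one]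
  | cons a l ih =>
    rw [FreeMonoid.ofList_cons, map_mul]
    have hg : MonoidAlgebra.of K (FreeMonoid (Option X)) (FreeMonoid.of a) = gen K a := rfl
    rw [hg, map_mul, phi_gen, ih]
    cases a with
    | none => simp
    | some x =>
      have h2 : (some x :: l).filter Option.isSome = some x :: l.filter Option.isSome := rfl
      rw [h2, FreeMonoid.ofList_cons, map_mul]
      rfl

lemma phi_single (w : FreeMonoid (Option X)) (c : K) :
    phi K (MonoidAlgebra.single w c) = MonoidAlgebra.single (Qf w) c := by
  have h : MonoidAlgebra.single w c = c • MonoidAlgebra.single w (1 : K) := by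
    rw [MonoidAlgebra.smul_single, smul_eq_mul, mul_one]
  have h2 : MonoidAlgebra.single (Qf w) c = c • MonoidAlgebra.single (Qf w) (1 : K) := by
    rw [MonoidAlgebra.smul_single, smul_eq_mul, mul_one]
  rw [h, h2, map_smul]
  congr 1
  exact phi_ofList (FreeMonoid.toList w)

lemma phi_eq_mapDomain (f : FA K (Option X)) :
    phi K f = MonoidAlgebra.mapDomain Qf f := by
  conv_lhs => rw [← MonoidAlgebra.sum_coeff_single f]
  conv_rhs => rw [← MonoidAlgebra.sum_coeff_single f]
  rw [map_finsuppSum, MonoidAlgebra.mapDomain_sum]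
  exact Finsupp.sum_congr fun w _ => by rw [phi_single, MonoidAlgebra.mapDomain_single]

lemma countP_add_filter (l : List (Option X)) :
    l.countP Option.isNone + (l.filter Option.isSome).length = l.length := by
  induction l with
  | nil => rfl
  | cons a l ih => cases a <;> simp_all <;> omega

lemma mem_Jc (f : FA K (Option X)) (d : ℕ) (hd : IsHomog K d f) (h0 : phi K f = 0) :
    f ∈ Jc K X := by
  classical
  set θ : FreeMonoid (Option X) → FreeMonoid (Option X) :=
    fun w => FreeMonoid.of (none : Option X) ^ ((FreeMonoid.toList w).countP Option.isNone) * Qf w with hθ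
  have hS : MonoidAlgebra.mapDomain θ f = 0 := by
    have h1 : MonoidAlgebra.mapDomain θ f =
        MonoidAlgebra.mapDomain
          (fun v => FreeMonoid.of (none : Option X) ^ (d - FreeMonoid.length v) * v)
          (MonoidAlgebra.mapDomain Qf f) := by
      unfold MonoidAlgebra.mapDomain
      rw [MonoidAlgebra.coeff_ofCoeff]
      congr 1
      rw [← Finsupp.mapDomain_comp]
      apply Finsupp.mapDomain_congr
      intro w hw
      have hlen : FreeMonoid.length w = d := hd w hw
      have hc : (FreeMonoid.toList w).countP Option.isNone = d - FreeMonoid.length (Qf w) := by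
        have h5 := countP_add_filter (FreeMonoid.toList w)
        have h6 : FreeMonoid.length (Qf w) = ((FreeMonoid.toList w).filter Option.isSome).length :=
          rfl
        have h7 : (FreeMonoid.toList w).length = d := hlen
        omega
      simp only [hθ, Function.comp, hc]
    rw [h1, ← phi_eq_mapDomain, h0, MonoidAlgebra.mapDomain_zero]
  have e2 : MonoidAlgebra.mapDomain θ f = ∑ w ∈ f.coeff.support, MonoidAlgebra.single (θ w) (f.coeff w) := by
    conv_lhs => rw [← MonoidAlgebra.sum_coeff_single f]
    rw [MonoidAlgebra.mapDomain_sum]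
    simp only [MonoidAlgebra.mapDomain_single, Finsupp.sum]
  have e1 : f = ∑ w ∈ f.coeff.support, MonoidAlgebra.single w (f.coeff w) := by
    conv_lhs => rw [← MonoidAlgebra.sum_coeff_single f]
    rfl
  have hfs : f = ∑ w ∈ f.coeff.support,
      (MonoidAlgebra.single w (f.coeff w) - MonoidAlgebra.single (θ w) (f.coeff w)) := by
    rw [Finset.sum_sub_distrib, ← e2, hS, sub_zero, ← e1]
  rw [hfs]
  apply sum_mem
  intro w hw
  have key : MonoidAlgebra.single w (1 : K) - MonoidAlgebra.single (θ w) (1 : K) ∈ Jc K X := by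
    have hca := claimA (K := K) (FreeMonoid.toList w)
    have hsθ : MonoidAlgebra.single (θ w) (1 : K)
        = tv K ^ ((FreeMonoid.toList w).countP Option.isNone) *
            MonoidAlgebra.of K (FreeMonoid (Option X))
              (FreeMonoid.ofList ((FreeMonoid.toList w).filter Option.isSome)) := by
      show MonoidAlgebra.of K (FreeMonoid (Option X)) (θ w) = _
      rw [hθ]
      rw [map_mul, map_pow]
      rfl
    rw [hsθ]
    exact hca
  have hsm : MonoidAlgebra.single w (f.coeff w) - MonoidAlgebra.single (θ w) (f.coeff w)
      = (f.coeff w) • (MonoidAlgebra.single w (1 : K) - MonoidAlgebra.single (θ w) (1 : K)) := by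
    rw [smul_sub, MonoidAlgebra.smul_single, MonoidAlgebra.smul_single, smul_eq_mul, mul_one]
  rw [hsm, Algebra.smul_def]
  exact (Jc K X).mul_mem_left _ _ key

end Stmt0Aux


/-- The largest graded two-sided ideal `C` contained in `ker φ` (generated by
all homogeneous elements killed by `φ`) is generated, as a two-sided ideal, by the commutators
`[x_i, t] = x_i t − t x_i`. -/
theorem statement_0 (K : Type*) [Field K] (X : Type*) [Countable X] :
    Cideal K (X := X) =
      TwoSidedIdeal.span {g | ∃ x : X, g = gen K (some x) * tv K - tv K * gen K (some x)} := by
  apply le_antisymm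
  · intro g hg
    rw [Cideal, TwoSidedIdeal.mem_span_iff] at hg
    apply hg
    rintro f ⟨⟨d, hd⟩, h0⟩
    exact mem_Jc f d hd h0
  · intro g hg
    rw [TwoSidedIdeal.mem_span_iff] at hg
    apply hg
    rintro f ⟨x, rfl⟩
    apply TwoSidedIdeal.subset_span
    refine ⟨⟨2, ?_⟩, ?_⟩
    · have hrep : gen K (some x) * tv K - tv K * gen K (some x)
          = MonoidAlgebra.single (FreeMonoid.of (some x) * FreeMonoid.of (none : Option X)) (1 : K)
            - MonoidAlgebra.single (FreeMonoid.of (none : Option X) * FreeMonoid.of (some x)) (1 : K) := by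
        simp [gen, tv, MonoidAlgebra.of_apply, MonoidAlgebra.single_mul_single]
      intro w hw
      classical
      rw [hrep, MonoidAlgebra.coeff_sub, MonoidAlgebra.coeff_single, MonoidAlgebra.coeff_single] at hw
      have h1 := Finsupp.support_sub hw
      rcases Finset.mem_union.mp h1 with h2 | h2 <;>
        · have h3 := Finsupp.support_single_subset h2
          simp only [Finset.mem_singleton] at h3
          subst h3
          rfl
    · have h1 : phi K (gen K (some x)) = gen K (some x) := phi_gen (some x)
      have h2 : phi K (gen K (none : Option X)) = 1 := phi_gen (none : Option X)
      rw [show tv K = gen K (none : Option X) from rfl, map_sub, map_mul, map_mul, h1, h2]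
      rw [mul_one, one_mul, sub_self]
end

section
/- A graded two-sided ideal J of F̄ with C ⊆ J is saturated if and only if for every f ∈ F̄, t·f ∈ J implies f ∈ J. -/
section StatementTwoAux

variable (K : Type*) [Field K]

lemma aux_sum_homComp {Y : Type*} (f : FA K Y) :
    ∑ d ∈ Finset.range (degF K f + 1), homComp K d f = f := by
  unfold homComp
  have hmaps : ∀ w ∈ f.coeff.support, FreeMonoid.length w ∈ Finset.range (degF K f + 1) :=
    fun w hw => Finset.mem_range.2 (Nat.lt_succ_of_le (Finset.le_sup hw))
  rw [Finset.sum_fiberwise_of_maps_to hmaps]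
  exact MonoidAlgebra.sum_coeff_single f

lemma aux_isHomog_homComp {Y : Type*} (d : ℕ) (f : FA K Y) :
    IsHomog K d (homComp K d f) := by
  intro w hw
  rw [homComp, MonoidAlgebra.coeff_sum] at hw
  obtain ⟨w', hw', hww'⟩ := Finsupp.mem_support_finset_sum w hw
  rw [MonoidAlgebra.coeff_single] at hww'
  have := Finsupp.support_single_subset hww'
  simp only [Finset.mem_singleton] at this
  subst this
  exact (Finset.mem_filter.1 hw').2

lemma aux_single_one_mul {Y : Type*} (v : FreeMonoid Y) (f : FA K Y) :
    MonoidAlgebra.single v (1 : K) * f =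
      ∑ w ∈ f.coeff.support, MonoidAlgebra.single (v * w) (f.coeff w) := by
  conv_lhs => rw [← MonoidAlgebra.sum_coeff_single f]
  rw [Finsupp.sum, Finset.mul_sum]
  refine Finset.sum_congr rfl fun w hw => ?_
  rw [MonoidAlgebra.single_mul_single, one_mul]

lemma aux_isHomog_single_mul {Y : Type*} (v : FreeMonoid Y) (d : ℕ) (f : FA K Y)
    (hf : IsHomog K d f) :
    IsHomog K (FreeMonoid.length v + d) (MonoidAlgebra.single v (1 : K) * f) := by
  rw [aux_single_one_mul]
  intro w hw
  rw [MonoidAlgebra.coeff_sum] at hw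
  obtain ⟨w', hw', hww'⟩ := Finsupp.mem_support_finset_sum w hw
  rw [MonoidAlgebra.coeff_single] at hww'
  have := Finsupp.support_single_subset hww'
  simp only [Finset.mem_singleton] at this
  subst this
  rw [FreeMonoid.length_mul, hf w' hw']

lemma aux_length_pow {Y : Type*} (y : Y) (m : ℕ) :
    FreeMonoid.length (FreeMonoid.of y ^ m) = m := by
  induction m with
  | zero => simp
  | succ n ih => rw [pow_succ, FreeMonoid.length_mul, ih, FreeMonoid.length_of]

lemma aux_tv_pow {X : Type*} (m : ℕ) :
    (tv K (X := X)) ^ m =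
      MonoidAlgebra.single ((FreeMonoid.of (none : Option X)) ^ m) (1 : K) := by
  rw [tv, gen, ← map_pow, MonoidAlgebra.of_apply]

lemma aux_isHomog_tv_pow_mul {X : Type*} (m d : ℕ) (f : FA K (Option X))
    (hf : IsHomog K d f) : IsHomog K (m + d) ((tv K) ^ m * f) := by
  rw [aux_tv_pow]
  have := aux_isHomog_single_mul K ((FreeMonoid.of (none : Option X)) ^ m) d f hf
  rwa [aux_length_pow] at this

lemma aux_isHomog_sub {Y : Type*} (d : ℕ) (f g : FA K Y)
    (hf : IsHomog K d f) (hg : IsHomog K d g) : IsHomog K d (f - g) := by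
  classical
  intro w hw
  rw [MonoidAlgebra.coeff_sub] at hw
  have := Finsupp.support_sub hw
  rcases Finset.mem_union.1 this with h | h
  · exact hf w h
  · exact hg w h

lemma aux_isHomog_sum {Y : Type*} (d : ℕ) {ι : Type*} (s : Finset ι)
    (f : ι → FA K Y) (hf : ∀ i ∈ s, IsHomog K d (f i)) :
    IsHomog K d (∑ i ∈ s, f i) := by
  intro w hw
  rw [MonoidAlgebra.coeff_sum] at hw
  obtain ⟨i, hi, hwi⟩ := Finsupp.mem_support_finset_sum w hw
  exact hf i hi w hwi

lemma aux_phi_tv {X : Type*} : phi K (tv K (X := X)) = 1 := by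
  rw [phi, tv, gen, MonoidAlgebra.lift_of]
  rfl

lemma aux_homComp_tv_mul {X : Type*} (d : ℕ) (f : FA K (Option X)) :
    homComp K (d + 1) (tv K * f) = tv K * homComp K d f := by
  classical
  have htv : tv K (X := X) =
      MonoidAlgebra.single (FreeMonoid.of (none : Option X)) (1 : K) := by
    rw [tv, gen, MonoidAlgebra.of_apply]
  have hσ : Function.Injective
      (fun w : FreeMonoid (Option X) => FreeMonoid.of (none : Option X) * w) :=
    fun a b h => mul_left_cancel h
  have hmap : tv K * f =
      MonoidAlgebra.ofCoeff
        (Finsupp.mapDomain (fun w => FreeMonoid.of (none : Option X) * w) f.coeff) := by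
    rw [htv, aux_single_one_mul, Finsupp.mapDomain, Finsupp.sum, MonoidAlgebra.ofCoeff_sum]
    rfl
  rw [hmap]
  unfold homComp
  simp only [MonoidAlgebra.coeff_ofCoeff]
  rw [Finsupp.mapDomain_support_of_injective hσ]
  rw [Finset.filter_image]
  have hpred : ∀ w ∈ f.coeff.support,
      (FreeMonoid.length ((fun w => FreeMonoid.of (none : Option X) * w) w) = d + 1) =
        (FreeMonoid.length w = d) := by
    intro w _
    simp only [FreeMonoid.length_mul, FreeMonoid.length_of, eq_iff_iff]
    omega
  rw [Finset.filter_congr (fun w hw => by rw [hpred w hw])]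
  rw [Finset.sum_image (fun a _ b _ h => hσ h)]
  rw [htv, Finset.mul_sum]
  refine Finset.sum_congr rfl fun w hw => ?_
  rw [MonoidAlgebra.single_mul_single, one_mul, Finsupp.mapDomain_apply hσ]

end StatementTwoAux

/-- A graded two-sided ideal `J ⊆ F̄` with `C ⊆ J` is saturated
(`J = Sat(J) = φ(J)^*`) if and only if `t·f ∈ J` implies `f ∈ J`. -/
theorem statement_2 (K : Type*) [Field K] (X : Type*) [Countable X]
    (J : TwoSidedIdeal (FA K (Option X))) (hJ : IsGradedF K J) (hC : Cideal K ≤ J) :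
    SatF K J = J ↔ ∀ f : FA K (Option X), tv K * f ∈ J → f ∈ J := by
  constructor
  · -- saturated → t-cancellation
    intro hS f hf
    have hrepr := aux_sum_homComp K f
    rw [← hrepr]
    refine sum_mem fun d _ => ?_
    have h1 : tv K * homComp K d f ∈ J := by
      rw [← aux_homComp_tv_mul]
      exact hJ _ hf _
    have h2 : homComp K d f ∈ SatF K J := by
      apply TwoSidedIdeal.subset_span
      refine ⟨⟨d, aux_isHomog_homComp K d f⟩, tv K * homComp K d f, h1, ?_⟩
      rw [map_mul, aux_phi_tv, one_mul]
    rwa [hS] at h2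
  · -- t-cancellation → saturated
    intro hT
    have cancel : ∀ (m : ℕ) (p : FA K (Option X)), (tv K) ^ m * p ∈ J → p ∈ J := by
      intro m
      induction m with
      | zero => intro p hp; simpa using hp
      | succ n ih =>
        intro p hp
        refine ih p (hT _ ?_)
        rwa [pow_succ', mul_assoc] at hp
    refine le_antisymm (fun g hg => ?_) (fun x hx => ?_)
    · -- SatF K J ≤ J
      rw [SatF, TwoSidedIdeal.mem_span_iff] at hg
      refine hg J ?_
      rintro g ⟨⟨d, hgd⟩, h, hh, hphi⟩
      set M := degF K h with hM
      -- the sum s ∈ J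
      have hsJ : ∀ k ∈ Finset.range (M + 1),
          (tv K) ^ (M + d - k) * homComp K k h ∈ J :=
        fun k _ => J.mul_mem_left _ _ (hJ h hh k)
      have hsmem : (∑ k ∈ Finset.range (M + 1),
          (tv K) ^ (M + d - k) * homComp K k h) ∈ J := sum_mem hsJ
      -- u is homogeneous of degree M + d and φ(u) = 0
      have huC : (tv K) ^ M * g -
          (∑ k ∈ Finset.range (M + 1), (tv K) ^ (M + d - k) * homComp K k h)
            ∈ Cideal K := by
        apply TwoSidedIdeal.subset_span
        constructor
        · refine ⟨M + d, aux_isHomog_sub K _ _ _ (aux_isHomog_tv_pow_mul K M d g hgd) ?_⟩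
          refine aux_isHomog_sum K _ _ _ fun k hk => ?_
          have hk' : k ≤ M := Nat.lt_succ_iff.1 (Finset.mem_range.1 hk)
          have he : M + d - k + k = M + d := by omega
          have := aux_isHomog_tv_pow_mul K (M + d - k) k (homComp K k h)
            (aux_isHomog_homComp K k h)
          rwa [he] at this
        · rw [map_sub, map_mul, map_pow, aux_phi_tv, one_pow, one_mul, map_sum]
          have hterm : ∀ k ∈ Finset.range (M + 1),
              phi K ((tv K) ^ (M + d - k) * homComp K k h) = phi K (homComp K k h) := by
            intro k _
            rw [map_mul, map_pow, aux_phi_tv, one_pow, one_mul]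
          rw [Finset.sum_congr rfl hterm, ← map_sum, aux_sum_homComp K h, hphi, sub_self]
      have htg : (tv K) ^ M * g ∈ J := by
        have := add_mem (hC huC) hsmem
        rwa [sub_add_cancel] at this
      exact cancel M g htg
    · -- J ≤ SatF K J
      have hrepr := aux_sum_homComp K x
      rw [← hrepr]
      refine sum_mem fun d _ => ?_
      exact TwoSidedIdeal.subset_span ⟨⟨d, aux_isHomog_homComp K d x⟩, homComp K d x, hJ x hx d, rfl⟩
end

section
/- For every graded two-sided ideal J of F̄ with C ⊆ J, the saturation is Sat(J) = {f ∈ F̄ : t^i f ∈ J for some i ≥ 0}. -/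
noncomputable section AuxStatement3

namespace Statement3Aux

open Finsupp

variable {K : Type*} [Field K] {X : Type*}

/-- Delete the occurrences of `t` (i.e. `none`) from a word. -/
def redW (w : FreeMonoid (Option X)) : FreeMonoid (Option X) :=
  FreeMonoid.ofList ((FreeMonoid.toList w).filter Option.isSome)

lemma length_redW_le (w : FreeMonoid (Option X)) :
    FreeMonoid.length (redW w) ≤ FreeMonoid.length w :=
  List.length_filter_le _ _

lemma redW_none_mul (w : FreeMonoid (Option X)) :
    redW (FreeMonoid.of none * w) = redW w := rfl

lemma redW_mul_none (w : FreeMonoid (Option X)) :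
    redW (w * FreeMonoid.of none) = redW w := by
  unfold redW
  rw [FreeMonoid.toList_mul, List.filter_append]
  simp [FreeMonoid.toList_of]

lemma redW_pow_none (i : ℕ) (w : FreeMonoid (Option X)) :
    redW (FreeMonoid.of none ^ i * w) = redW w := by
  induction i with
  | zero => rw [pow_zero, one_mul]
  | succ n ih => rw [pow_succ', mul_assoc, redW_none_mul, ih]

lemma redW_idem (w : FreeMonoid (Option X)) : redW (redW w) = redW w := by
  unfold redW
  rw [FreeMonoid.toList_ofList, List.filter_filter]
  simp

lemma length_none_pow (i : ℕ) :
    FreeMonoid.length (FreeMonoid.of (none : Option X) ^ i) = i := by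
  induction i with
  | zero => rfl
  | succ n ih => rw [pow_succ, FreeMonoid.length_mul, ih, FreeMonoid.length_of]

lemma prod_map_elim (l : List (Option X)) :
    ((l.map fun o => Option.elim o 1 fun x => gen K (some x)).prod : FA K (Option X))
      = MonoidAlgebra.single (FreeMonoid.ofList (l.filter Option.isSome)) (1 : K) := by
  induction l with
  | nil => exact MonoidAlgebra.one_def
  | cons o l ih =>
    cases o with
    | none =>
      rw [List.map_cons, List.prod_cons, ih]
      simp [List.filter_cons]
    | some x =>
      rw [List.map_cons, List.prod_cons, ih, List.filter_cons_of_pos (by simp)]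
      show MonoidAlgebra.single (FreeMonoid.of (some x)) (1 : K) * _ = _
      rw [MonoidAlgebra.single_mul_single, one_mul]
      rfl

lemma phi_single (w : FreeMonoid (Option X)) (c : K) :
    phi K (MonoidAlgebra.single w c) = MonoidAlgebra.single (redW w) c := by
  unfold phi
  rw [MonoidAlgebra.lift_single, FreeMonoid.lift_apply, prod_map_elim,
    MonoidAlgebra.smul_single', mul_one]
  rfl

lemma tv_pow_eq (i : ℕ) : (tv K : FA K (Option X)) ^ i
    = MonoidAlgebra.single (FreeMonoid.of (none : Option X) ^ i) (1 : K) := by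
  rw [tv, gen, MonoidAlgebra.of_apply, MonoidAlgebra.single_pow, one_pow]

lemma phi_tv : phi K (tv K : FA K (Option X)) = 1 := by
  have : (tv K : FA K (Option X)) = MonoidAlgebra.single (FreeMonoid.of none) 1 := by
    rw [tv, gen, MonoidAlgebra.of_apply]
  rw [this, phi_single]
  exact MonoidAlgebra.one_def.symm

lemma phi_tv_pow_mul (i : ℕ) (a : FA K (Option X)) :
    phi K (tv K ^ i * a) = phi K a := by
  rw [map_mul, map_pow, phi_tv, one_pow, one_mul]

lemma single_one_mul (u : FreeMonoid (Option X)) (f : FA K (Option X)) :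
    MonoidAlgebra.single u (1 : K) * f = MonoidAlgebra.mapDomain (fun w => u * w) f := by
  induction f using MonoidAlgebra.induction with
  | zero => rw [MonoidAlgebra.mapDomain_zero, mul_zero]
  | single_add a b f _ _ ih =>
    rw [mul_add, ih, MonoidAlgebra.mapDomain_add, MonoidAlgebra.mapDomain_single,
      MonoidAlgebra.single_mul_single, one_mul]

/-- The homogenizing word map. -/
def Gm (m : ℕ) (w : FreeMonoid (Option X)) : FreeMonoid (Option X) :=
  FreeMonoid.of none ^ (m - FreeMonoid.length (redW w)) * redW w

/-- The linearization of `Gm`. -/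
def rho (m : ℕ) (f : FA K (Option X)) : FA K (Option X) := MonoidAlgebra.mapDomain (Gm m) f

lemma coeff_mapDomain' (g : FreeMonoid (Option X) → FreeMonoid (Option X)) (f : FA K (Option X)) :
    (MonoidAlgebra.mapDomain g f).coeff = Finsupp.mapDomain g f.coeff := rfl

lemma redW_Gm (m : ℕ) (w : FreeMonoid (Option X)) : redW (Gm m w) = redW w := by
  unfold Gm; rw [redW_pow_none, redW_idem]

lemma length_Gm {m : ℕ} {w : FreeMonoid (Option X)}
    (h : FreeMonoid.length (redW w) ≤ m) : FreeMonoid.length (Gm m w) = m := by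
  unfold Gm; rw [FreeMonoid.length_mul, length_none_pow]; omega

lemma Gm_redW (m : ℕ) (w : FreeMonoid (Option X)) : Gm m (redW w) = Gm m w := by
  unfold Gm; rw [redW_idem]

lemma rho_phi (m : ℕ) (f : FA K (Option X)) : rho m (phi K f) = rho m f := by
  induction f using MonoidAlgebra.induction with
  | zero => rw [map_zero]
  | single_add a b f _ _ ih =>
    have h1 : phi K (MonoidAlgebra.single a b + f)
        = MonoidAlgebra.single (redW a) b + phi K f := by
      rw [map_add, phi_single]
    rw [h1]
    unfold rho at ih ⊢
    rw [MonoidAlgebra.mapDomain_add, MonoidAlgebra.mapDomain_add, MonoidAlgebra.mapDomain_single,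
      MonoidAlgebra.mapDomain_single, Gm_redW, ih]

lemma key_C (h : FA K (Option X)) (e m : ℕ) (hh : IsHomog K e h) (hem : e ≤ m) :
    (tv K) ^ (m - e) * h - rho m h ∈ Cideal K := by
  rw [tv_pow_eq]
  unfold rho
  rw [← MonoidAlgebra.sum_coeff_single h]
  rw [MonoidAlgebra.mapDomain_sum, Finsupp.sum, Finsupp.sum, Finset.mul_sum,
    ← Finset.sum_sub_distrib]
  refine sum_mem fun w hw => ?_
  simp only [MonoidAlgebra.mapDomain_single, MonoidAlgebra.single_mul_single, one_mul]
  apply TwoSidedIdeal.subset_span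
  refine ⟨⟨m, fun v hv => ?_⟩, ?_⟩
  · classical
    simp only [MonoidAlgebra.coeff_sub, MonoidAlgebra.coeff_single] at hv
    have hv' := Finsupp.support_sub hv
    have hwlen : FreeMonoid.length w = e := hh w hw
    have hred : FreeMonoid.length (redW w) ≤ m := le_trans (length_redW_le w) (by omega)
    rcases Finset.mem_union.mp hv' with hv1 | hv1
    · have := Finsupp.support_single_subset hv1
      rw [Finset.mem_singleton] at this
      subst this
      rw [FreeMonoid.length_mul, length_none_pow, hwlen]
      omega
    · have := Finsupp.support_single_subset hv1
      rw [Finset.mem_singleton] at this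
      subst this
      exact length_Gm hred
  · rw [map_sub, phi_single, phi_single, redW_pow_none, redW_Gm, sub_self]

lemma comm_one (a : FA K (Option X)) : tv K * a - a * tv K ∈ Cideal K := by
  induction a using MonoidAlgebra.induction with
  | zero => simpa using (Cideal K (X := X)).zero_mem
  | single_add w c f _ _ ih =>
    have hsplit : ∀ a b : FA K (Option X), tv K * (a + b) - (a + b) * tv K
        = (tv K * a - a * tv K) + (tv K * b - b * tv K) := by
      intros; noncomm_ring
    rw [hsplit (MonoidAlgebra.single w c) f]
    refine add_mem ?_ ih
    have htv : (tv K : FA K (Option X)) = MonoidAlgebra.single (FreeMonoid.of none) 1 := by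
      rw [tv, gen, MonoidAlgebra.of_apply]
    rw [htv, MonoidAlgebra.single_mul_single, MonoidAlgebra.single_mul_single, one_mul, mul_one]
    apply TwoSidedIdeal.subset_span
    refine ⟨⟨FreeMonoid.length w + 1, fun v hv => ?_⟩, ?_⟩
    · classical
      simp only [MonoidAlgebra.coeff_sub, MonoidAlgebra.coeff_single] at hv
      have hv' := Finsupp.support_sub hv
      rcases Finset.mem_union.mp hv' with hv1 | hv1 <;>
        [(have := Finsupp.support_single_subset hv1);
         (have := Finsupp.support_single_subset hv1)] <;>
        rw [Finset.mem_singleton] at this <;> subst this <;>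
        rw [FreeMonoid.length_mul] <;> simp [FreeMonoid.length_of] <;> omega
    · rw [map_sub, phi_single, phi_single, redW_none_mul, redW_mul_none, sub_self]

lemma comm_pow (a : FA K (Option X)) (i : ℕ) :
    tv K ^ i * a - a * tv K ^ i ∈ Cideal K := by
  induction i with
  | zero => simpa using (Cideal K (X := X)).zero_mem
  | succ n ih =>
    have : tv K ^ (n + 1) * a - a * tv K ^ (n + 1)
        = tv K * (tv K ^ n * a - a * tv K ^ n) + (tv K * a - a * tv K) * tv K ^ n := by
      rw [pow_succ']; noncomm_ring
    rw [this]
    exact add_mem (TwoSidedIdeal.mul_mem_left _ _ _ ih)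
      (TwoSidedIdeal.mul_mem_right _ _ _ (comm_one a))

lemma isHomog_homComp (d : ℕ) (f : FA K (Option X)) : IsHomog K d (homComp K d f) := by
  classical
  intro w hw
  unfold homComp at hw
  rw [MonoidAlgebra.coeff_sum] at hw
  have := Finsupp.support_finset_sum hw
  obtain ⟨v, hv, hwv⟩ := Finset.mem_biUnion.mp this
  have := Finsupp.support_single_subset hwv
  rw [Finset.mem_singleton] at this
  subst this
  exact (Finset.mem_filter.mp hv).2

lemma sum_homComp (f : FA K (Option X)) :
    ∑ d ∈ Finset.range (degF K f + 1), homComp K d f = f := by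
  unfold homComp
  have := Finset.sum_fiberwise_of_maps_to (s := f.coeff.support)
    (t := Finset.range (degF K f + 1)) (g := FreeMonoid.length)
    (fun w hw => Finset.mem_range.mpr (Nat.lt_succ_of_le (Finset.le_sup hw)))
    (fun w => MonoidAlgebra.single w (f.coeff w))
  exact this.trans (MonoidAlgebra.sum_coeff_single f)

lemma homComp_tv_pow (i d : ℕ) (f : FA K (Option X)) :
    homComp K (i + d) (tv K ^ i * f) = tv K ^ i * homComp K d f := by
  classical
  rw [tv_pow_eq, single_one_mul]
  have hinj : Function.Injective
      (fun w : FreeMonoid (Option X) => FreeMonoid.of (none : Option X) ^ i * w) :=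
    fun a b h => mul_left_cancel h
  unfold homComp
  rw [coeff_mapDomain']
  rw [Finsupp.mapDomain_support_of_injective hinj, Finset.filter_image]
  rw [Finset.sum_image (fun a _ b _ h => hinj h)]
  rw [Finset.mul_sum]
  have hfil : (f.coeff.support.filter fun a =>
        FreeMonoid.length (FreeMonoid.of (none : Option X) ^ i * a) = i + d)
      = f.coeff.support.filter fun a => FreeMonoid.length a = d := by
    apply Finset.filter_congr
    intro a _
    rw [FreeMonoid.length_mul, length_none_pow]
    omega
  rw [hfil]
  refine Finset.sum_congr rfl fun w hw => ?_
  rw [Finsupp.mapDomain_apply hinj, MonoidAlgebra.single_mul_single, one_mul]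

lemma rho_finset_sum {ι : Type*} (m : ℕ) (s : Finset ι) (g : ι → FA K (Option X)) :
    rho m (∑ e ∈ s, g e) = ∑ e ∈ s, rho m (g e) := by
  classical
  unfold rho
  induction s using Finset.induction_on with
  | empty => simp [MonoidAlgebra.mapDomain_zero]
  | insert a s ha ih =>
    rw [Finset.sum_insert ha, Finset.sum_insert ha, MonoidAlgebra.mapDomain_add, ih]

end Statement3Aux

end AuxStatement3

/-- For every graded two-sided ideal `J ⊆ F̄` with `C ⊆ J`,
`Sat(J) = {f ∈ F̄ : t^i f ∈ J for some i ≥ 0}`. -/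
theorem statement_3 (K : Type*) [Field K] (X : Type*) [Countable X]
    (J : TwoSidedIdeal (FA K (Option X))) (hJ : IsGradedF K J) (hC : Cideal K ≤ J) :
    ∀ f : FA K (Option X), f ∈ SatF K J ↔ ∃ i : ℕ, (tv K) ^ i * f ∈ J := by
  classical
  intro f
  constructor
  · intro hf
    -- the crux: every generator of `Sat(J)` satisfies `t^i g ∈ J` for some `i`
    have hgen : ∀ g : FA K (Option X), (∃ d, IsHomog K d g) →
        ∀ h ∈ J, phi K g = phi K h → ∃ i, tv K ^ i * g ∈ J := by
      rintro g ⟨d, hgd⟩ h hh hph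
      set D := degF K h with hD
      set m := D + d with hm
      refine ⟨D, ?_⟩
      have h1 : tv K ^ (m - d) * g - Statement3Aux.rho m g ∈ Cideal K :=
        Statement3Aux.key_C g d m hgd (by omega)
      have hmd : m - d = D := by omega
      rw [hmd] at h1
      have h3 : Statement3Aux.rho m g = Statement3Aux.rho m h := by
        rw [← Statement3Aux.rho_phi, hph, Statement3Aux.rho_phi]
      have hsum : Statement3Aux.rho m h
          = ∑ e ∈ Finset.range (D + 1), Statement3Aux.rho m (homComp K e h) := by
        conv_lhs => rw [← Statement3Aux.sum_homComp h]
        exact Statement3Aux.rho_finset_sum m _ _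
      have h2 : (∑ e ∈ Finset.range (D + 1), tv K ^ (m - e) * homComp K e h)
          - Statement3Aux.rho m h ∈ Cideal K := by
        rw [hsum, ← Finset.sum_sub_distrib]
        exact sum_mem fun e he => Statement3Aux.key_C (homComp K e h) e m
          (Statement3Aux.isHomog_homComp e h)
          (by have := Finset.mem_range.mp he; omega)
      have hH : (∑ e ∈ Finset.range (D + 1), tv K ^ (m - e) * homComp K e h) ∈ J :=
        sum_mem fun e _ => TwoSidedIdeal.mul_mem_left _ _ _ (hJ h hh e)
      have hfinal : tv K ^ D * g
          = (tv K ^ D * g - Statement3Aux.rho m g)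
            - ((∑ e ∈ Finset.range (D + 1), tv K ^ (m - e) * homComp K e h)
                - Statement3Aux.rho m h)
            + (∑ e ∈ Finset.range (D + 1), tv K ^ (m - e) * homComp K e h) := by
        rw [h3]; abel
      rw [hfinal]
      exact add_mem (sub_mem (hC h1) (hC h2)) hH
    let T : TwoSidedIdeal (FA K (Option X)) :=
      TwoSidedIdeal.mk' {g | ∃ i, tv K ^ i * g ∈ J}
        ⟨0, by simpa using J.zero_mem⟩
        (by
          rintro x y ⟨i, hi⟩ ⟨j, hj⟩
          refine ⟨i + j, ?_⟩
          have hxy : tv K ^ (i + j) * (x + y)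
              = tv K ^ j * (tv K ^ i * x) + tv K ^ i * (tv K ^ j * y) := by
            rw [mul_add, ← mul_assoc, ← mul_assoc, ← pow_add, ← pow_add, add_comm j i]
          rw [hxy]
          exact add_mem (TwoSidedIdeal.mul_mem_left _ _ _ hi)
            (TwoSidedIdeal.mul_mem_left _ _ _ hj))
        (by
          rintro x ⟨i, hi⟩
          exact ⟨i, by rw [mul_neg]; exact neg_mem hi⟩)
        (by
          rintro x y ⟨i, hi⟩
          refine ⟨i, ?_⟩
          have hxy : tv K ^ i * (x * y)
              = (tv K ^ i * x - x * tv K ^ i) * y + x * (tv K ^ i * y) := by noncomm_ring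
          rw [hxy]
          exact add_mem
            (TwoSidedIdeal.mul_mem_right _ _ _ (hC (Statement3Aux.comm_pow x i)))
            (TwoSidedIdeal.mul_mem_left _ _ _ hi))
        (by
          rintro x y ⟨i, hi⟩
          exact ⟨i, by rw [← mul_assoc]; exact TwoSidedIdeal.mul_mem_right _ _ _ hi⟩)
    have hmem : f ∈ T := by
      refine TwoSidedIdeal.mem_span_iff.mp hf T ?_
      rintro g ⟨⟨d, hgd⟩, h, hh, hph⟩
      exact (TwoSidedIdeal.mem_mk' _ _ _ _ _ _ g).mpr (hgen g ⟨d, hgd⟩ h hh hph)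
    exact (TwoSidedIdeal.mem_mk' _ _ _ _ _ _ f).mp hmem
  · rintro ⟨i, hi⟩
    have hdec : f = ∑ d ∈ Finset.range (degF K f + 1), homComp K d f :=
      (Statement3Aux.sum_homComp f).symm
    rw [hdec]
    refine sum_mem fun d _ => ?_
    apply TwoSidedIdeal.subset_span
    exact ⟨⟨d, Statement3Aux.isHomog_homComp d f⟩,
      homComp K (i + d) (tv K ^ i * f), hJ _ hi (i + d),
      by rw [Statement3Aux.homComp_tv_pow, Statement3Aux.phi_tv_pow_mul]⟩
end

section
/- For every ℕ-ideal I of P, the multihomogenization I^* equals the ideal of P̄ generated by the set {f^* : f ∈ I, f ≠ 0}. -/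
/-! ### Auxiliary lemmas for Statement 4 -/

namespace Statement4Aux

open MvPolynomial Finsupp

noncomputable section

variable {K : Type*} [Field K] {X : Type*}

/-- The embedding of exponent vectors `P → P̄`. -/
abbrev emv {X : Type*} (p : X × ℕ+) : (Option X) × ℕ+ := ((some p.1 : Option X), p.2)

lemma emv_inj {X : Type*} : Function.Injective (emv (X := X)) := by
  intro a b h
  cases a; cases b; simpa [emv, Prod.ext_iff] using h

/-- x-part of an exponent vector in `P̄`. -/
def resX (n : ((Option X) × ℕ+) →₀ ℕ) : ((Option X) × ℕ+) →₀ ℕ :=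
  Finsupp.filter (fun p => p.1.isSome = true) n

/-- t-part of an exponent vector in `P̄`. -/
def resT (n : ((Option X) × ℕ+) →₀ ℕ) : ((Option X) × ℕ+) →₀ ℕ :=
  Finsupp.filter (fun p => ¬ p.1.isSome = true) n

lemma resX_add_resT (n : ((Option X) × ℕ+) →₀ ℕ) : resX n + resT n = n :=
  Finsupp.filter_pos_add_filter_neg n _

lemma resX_add (a b : ((Option X) × ℕ+) →₀ ℕ) : resX (a + b) = resX a + resX b :=
  Finsupp.filter_add

lemma placeDeg_add (a b : ((Option X) × ℕ+) →₀ ℕ) :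
    placeDeg (a + b) = placeDeg a + placeDeg b := Finsupp.mapDomain_add

lemma tExp_add (a b : ℕ+ →₀ ℕ) : tExp (X := X) (a + b) = tExp a + tExp b :=
  Finsupp.mapDomain_add

lemma placeDeg_tExp (ν : ℕ+ →₀ ℕ) : placeDeg (tExp (X := X) ν) = ν := by
  rw [placeDeg, tExp, ← Finsupp.mapDomain_comp]
  exact Finsupp.mapDomain_id

lemma placeDeg_emv (m : (X × ℕ+) →₀ ℕ) :
    placeDeg (Finsupp.mapDomain emv m) = placeDeg m := by
  rw [placeDeg, ← Finsupp.mapDomain_comp]; rfl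

lemma resX_emv (m : (X × ℕ+) →₀ ℕ) :
    resX (Finsupp.mapDomain emv m) = Finsupp.mapDomain emv m := by
  ext a
  rw [resX, Finsupp.filter_apply]
  split_ifs with h
  · rfl
  · rw [Finsupp.mapDomain_notin_range]
    rintro ⟨p, rfl⟩
    exact h rfl

lemma resX_tExp (ν : ℕ+ →₀ ℕ) : resX (tExp (X := X) ν) = 0 := by
  ext a
  rw [resX, Finsupp.filter_apply]
  split_ifs with h
  · rw [tExp, Finsupp.mapDomain_notin_range]
    · rfl
    · rintro ⟨k, rfl⟩
      simp at h
  · rfl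

lemma resT_eq_tExp (n : ((Option X) × ℕ+) →₀ ℕ) : resT n = tExp (placeDeg (resT n)) := by
  rw [tExp, placeDeg, ← Finsupp.mapDomain_comp]
  rw [show Finsupp.mapDomain ((fun k => ((none : Option X), k)) ∘ Prod.snd) (resT n)
      = Finsupp.mapDomain id (resT n) from Finsupp.mapDomain_congr ?_, Finsupp.mapDomain_id]
  intro p hp
  rw [resT, Finsupp.support_filter, Finset.mem_filter] at hp
  have : p.1 = none := Option.not_isSome_iff_eq_none.mp (by simpa using hp.2)
  show ((none : Option X), p.2) = p
  rw [← this]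

lemma reconstruct {μ : ℕ+ →₀ ℕ} {n : ((Option X) × ℕ+) →₀ ℕ} (h : placeDeg n = μ) :
    n = resX n + tExp (μ - placeDeg (resX n)) := by
  have hsplit := resX_add_resT n
  have hdeg : placeDeg (resX n) + placeDeg (resT n) = μ := by
    rw [← placeDeg_add, hsplit, h]
  have : placeDeg (resT n) = μ - placeDeg (resX n) :=
    eq_tsub_of_add_eq (by rw [add_comm]; exact hdeg)
  rw [← this, ← resT_eq_tExp, hsplit]

lemma resX_inj {μ : ℕ+ →₀ ℕ} {n n' : ((Option X) × ℕ+) →₀ ℕ} (h : placeDeg n = μ)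
    (h' : placeDeg n' = μ) (hr : resX n = resX n') : n = n' := by
  rw [reconstruct h, reconstruct h', hr]

lemma psi_monomial (n : ((Option X) × ℕ+) →₀ ℕ) (c : K) :
    psi K (monomial n c) = monomial (resX n) c := by
  rw [psi, aeval_monomial]
  have hsplit := resX_add_resT n
  have h1 : (resX n).prod (fun p k =>
      (Option.elim p.1 1 (fun x => (MvPolynomial.X (some x, p.2) : PL K (Option X)))) ^ k)
      = monomial (resX n) 1 := by
    rw [monomial_eq, C_1, one_mul]
    apply Finsupp.prod_congr
    intro p hp
    rw [resX, Finsupp.support_filter, Finset.mem_filter] at hp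
    obtain ⟨x, hx⟩ := Option.isSome_iff_exists.mp hp.2
    have hpx : p = (some x, p.2) := by rw [← hx]
    rw [hpx]
    simp
  have h2 : (resT n).prod (fun p k =>
      (Option.elim p.1 1 (fun x => (MvPolynomial.X (some x, p.2) : PL K (Option X)))) ^ k)
      = 1 := by
    apply Finset.prod_eq_one
    intro p hp
    rw [resT, Finsupp.support_filter, Finset.mem_filter] at hp
    have : p.1 = none := Option.not_isSome_iff_eq_none.mp (by simpa using hp.2)
    simp [this]
  have hprod : n.prod (fun p k =>
      (Option.elim p.1 1 (fun x => (MvPolynomial.X (some x, p.2) : PL K (Option X)))) ^ k)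
      = monomial (resX n) 1 := by
    conv_lhs => rw [← hsplit]
    rw [Finsupp.prod_add_index' (fun a => pow_zero _) (fun a b1 b2 => pow_add _ _ _), h1, h2,
      mul_one]
  rw [hprod, algebraMap_eq, C_mul_monomial, mul_one]

lemma psi_apply (g : PL K (Option X)) :
    psi K g = ∑ n ∈ g.support, monomial (resX n) (coeff n g) := by
  conv_lhs => rw [← support_sum_monomial_coeff g]
  rw [map_sum]
  exact Finset.sum_congr rfl fun n _ => psi_monomial n _

lemma eq_zero_of_psi {μ : ℕ+ →₀ ℕ} {g : PL K (Option X)} (hg : IsMultiHomog K μ g)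
    (h : psi K g = 0) : g = 0 := by
  classical
  by_contra hne
  obtain ⟨n0, hn0⟩ := (MvPolynomial.support_nonempty.mpr hne)
  have hc : coeff (resX n0) (psi K g) = coeff n0 g := by
    rw [psi_apply, coeff_sum]
    rw [Finset.sum_eq_single_of_mem n0 hn0]
    · rw [coeff_monomial, if_pos rfl]
    · intro n hn hne'
      rw [coeff_monomial, if_neg]
      intro hRes
      exact hne' (resX_inj (hg n hn) (hg n0 hn0) hRes)
  rw [h, coeff_zero] at hc
  exact MvPolynomial.mem_support_iff.mp hn0 hc.symm

lemma psi_inj {μ : ℕ+ →₀ ℕ} {g1 g2 : PL K (Option X)} (h1 : IsMultiHomog K μ g1)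
    (h2 : IsMultiHomog K μ g2) (h : psi K g1 = psi K g2) : g1 = g2 := by
  classical
  have hsub : IsMultiHomog K μ (g1 - g2) := by
    intro m hm
    have := MvPolynomial.support_sub _ g1 g2 hm
    rcases Finset.mem_union.mp this with hh | hh
    · exact h1 m hh
    · exact h2 m hh
  have := eq_zero_of_psi hsub (by rw [map_sub, h, sub_self])
  exact sub_eq_zero.mp this

/-- Multihomogenization with prescribed multidegree `μ`. -/
def gc {X : Type*} (K : Type*) [Field K] (μ : ℕ+ →₀ ℕ) (f : PL K X) : PL K (Option X) :=
  ∑ m ∈ f.support,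
    monomial (Finsupp.mapDomain emv m + tExp (μ - placeDeg m)) (coeff m f)

lemma mhstar_eq_gc (f : PL K X) : mhstar K f = gc K (topDeg K f) f := rfl

lemma gc_multihomog {μ : ℕ+ →₀ ℕ} {f : PL K X} (h : ∀ m ∈ f.support, placeDeg m ≤ μ) :
    IsMultiHomog K μ (gc K μ f) := by
  classical
  intro m' hm'
  have hc := MvPolynomial.mem_support_iff.mp hm'
  rw [gc, coeff_sum] at hc
  obtain ⟨m, hm, hne⟩ := Finset.exists_ne_zero_of_sum_ne_zero hc
  have hexp : Finsupp.mapDomain emv m + tExp (μ - placeDeg m) = m' := by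
    by_contra hr; rw [coeff_monomial, if_neg hr] at hne; exact hne rfl
  rw [← hexp, placeDeg_add, placeDeg_emv, placeDeg_tExp, add_tsub_cancel_of_le (h m hm)]

lemma psi_gc {μ : ℕ+ →₀ ℕ} (f : PL K X) : psi K (gc K μ f) = embP K f := by
  rw [gc, map_sum]
  conv_rhs => rw [← support_sum_monomial_coeff f]
  rw [embP, map_sum]
  refine Finset.sum_congr rfl fun m _ => ?_
  rw [psi_monomial, rename_monomial, resX_add, resX_emv, resX_tExp, add_zero]

lemma gc_factor {μ ν : ℕ+ →₀ ℕ} {f : PL K X} (h1 : ∀ m ∈ f.support, placeDeg m ≤ ν)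
    (h2 : ν ≤ μ) : monomial (tExp (μ - ν)) (1 : K) * gc K ν f = gc K μ f := by
  rw [gc, gc, Finset.mul_sum]
  refine Finset.sum_congr rfl fun m hm => ?_
  rw [monomial_mul, one_mul]
  congr 1
  rw [add_left_comm, ← tExp_add, tsub_add_tsub_cancel h2 (h1 m hm)]

lemma psi_mhstar (f : PL K X) : psi K (mhstar K f) = embP K f := by
  rw [mhstar_eq_gc, psi_gc]

lemma mhstar_multihomog (f : PL K X) : IsMultiHomog K (topDeg K f) (mhstar K f) := by
  rw [mhstar_eq_gc]
  exact gc_multihomog fun m hm => Finset.le_sup hm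

lemma shiftVar_zero {Y : Type*} : shiftVar (Y := Y) 0 = id := by
  funext p
  exact Prod.ext rfl (Subtype.ext rfl)

lemma shift_zero {Y : Type*} (g : PL K Y) : shift K 0 g = g := by
  rw [shift, shiftVar_zero]
  exact rename_id_apply g

lemma shiftVar_inj {Y : Type*} (k : ℕ) : Function.Injective (shiftVar (Y := Y) k) := by
  intro p q h
  rw [shiftVar, shiftVar, Prod.ext_iff] at h
  obtain ⟨h1, h2⟩ := h
  have h3 : (p.2 : ℕ) + k = (q.2 : ℕ) + k := congrArg Subtype.val h2
  exact Prod.ext h1 (PNat.coe_injective (by omega))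

/-- The shift on place indices. -/
def psft (k : ℕ) (j : ℕ+) : ℕ+ := ⟨j + k, Nat.add_pos_left j.2 k⟩

lemma psi_shift (k : ℕ) (g : PL K (Option X)) :
    psi K (shift K k g) = shift K k (psi K g) := by
  have h : (psi K).comp (shift K (Y := Option X) k) = (shift K k).comp (psi K) := by
    apply MvPolynomial.algHom_ext
    rintro ⟨o, j⟩
    cases o <;> simp [psi, shift, shiftVar]
  exact AlgHom.congr_fun h g

lemma embP_shift (k : ℕ) (f : PL K X) : embP K (shift K k f) = shift K k (embP K f) := by
  simp only [embP, shift, rename_rename]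
  rfl

lemma shift_multihomog {μ : ℕ+ →₀ ℕ} {g : PL K (Option X)} (hg : IsMultiHomog K μ g)
    (k : ℕ) : IsMultiHomog K (Finsupp.mapDomain (psft k) μ) (shift K k g) := by
  classical
  intro m' hm'
  rw [shift, MvPolynomial.support_rename_of_injective (shiftVar_inj k),
    Finset.mem_image] at hm'
  obtain ⟨m, hm, rfl⟩ := hm'
  show placeDeg (Finsupp.mapDomain (shiftVar k) m) = _
  rw [placeDeg, ← Finsupp.mapDomain_comp,
    show Prod.snd ∘ shiftVar (Y := Option X) k = psft k ∘ Prod.snd from rfl,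
    Finsupp.mapDomain_comp, ← placeDeg, hg m hm]

lemma key {I : Ideal (PL K X)} {g : PL K (Option X)} {μ : ℕ+ →₀ ℕ} {f : PL K X}
    (hg : IsMultiHomog K μ g) (hf : f ∈ I) (hp : psi K g = embP K f) :
    g ∈ Ideal.span {g | ∃ f ∈ I, f ≠ 0 ∧ g = mhstar K f} := by
  classical
  by_cases hf0 : f = 0
  · have hz : g = 0 := eq_zero_of_psi hg (by rw [hp, hf0, map_zero])
    rw [hz]
    exact Ideal.zero_mem _
  · have hle : ∀ m ∈ f.support, placeDeg m ≤ μ := by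
      intro m hm
      have hc : coeff (Finsupp.mapDomain emv m) (psi K g) ≠ 0 := by
        rw [hp, embP, coeff_rename_mapDomain _ emv_inj]
        exact MvPolynomial.mem_support_iff.mp hm
      rw [psi_apply, coeff_sum] at hc
      obtain ⟨n, hn, hne⟩ := Finset.exists_ne_zero_of_sum_ne_zero hc
      have hres : resX n = Finsupp.mapDomain emv m := by
        by_contra hr; rw [coeff_monomial, if_neg hr] at hne; exact hne rfl
      calc placeDeg m = placeDeg (resX n) := by rw [hres, placeDeg_emv]
        _ ≤ placeDeg (resX n) + placeDeg (resT n) := self_le_add_right _ _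
        _ = μ := by rw [← placeDeg_add, resX_add_resT, hg n hn]
    have hνμ : topDeg K f ≤ μ := Finset.sup_le hle
    have hsup : ∀ m ∈ f.support, placeDeg m ≤ topDeg K f := fun m hm => Finset.le_sup hm
    have hgeq : g = monomial (tExp (μ - topDeg K f)) (1 : K) * mhstar K f := by
      rw [mhstar_eq_gc, gc_factor hsup hνμ]
      exact psi_inj hg (gc_multihomog hle) (by rw [hp, psi_gc])
    rw [hgeq]
    exact Ideal.mul_mem_left _ _ (Ideal.subset_span ⟨f, hf, hf0, rfl⟩)

end

end Statement4Aux

/-- For every ℕ-ideal `I ⊆ P`, the multihomogenization `I^*` equals the ideal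
of `P̄` generated by `{f^* : 0 ≠ f ∈ I}`. -/
theorem statement_4 (K : Type*) [Field K] (X : Type*) [Countable X]
    (I : Ideal (PL K X)) (hI : IsNIdeal K I) :
    mhstarIdeal K I = Ideal.span {g | ∃ f ∈ I, f ≠ 0 ∧ g = mhstar K f} := by
  classical
  apply le_antisymm
  · rw [mhstarIdeal, nspan]
    apply Ideal.span_le.mpr
    rintro g ⟨k, g', ⟨⟨μ, hμ⟩, f, hfI, hpsi⟩, rfl⟩
    exact Statement4Aux.key (Statement4Aux.shift_multihomog hμ k) (hI k f hfI)
      (by rw [Statement4Aux.psi_shift, hpsi, Statement4Aux.embP_shift])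
  · apply Ideal.span_le.mpr
    rintro g ⟨f, hfI, hf0, rfl⟩
    rw [mhstarIdeal, nspan]
    apply Ideal.subset_span
    exact ⟨0, mhstar K f, ⟨⟨topDeg K f, Statement4Aux.mhstar_multihomog f⟩, f, hfI,
      Statement4Aux.psi_mhstar f⟩, (Statement4Aux.shift_zero _).symm⟩
end
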